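/- Consider a single cell and a single sub-carrier with M ≥ 1 users indexed 1, …, M in decreasing order of link gain: g₁ ≥ g₂ ≥ … ≥ g_M > 0, so user 1 is the strongest and is decoded last while user M is decoded first. Let I_i ≥ 0 be the inter-cell interference power received by user i, let N > 0 be the noise power, and suppose the SIC feasibility conditions g_i·I_{i+1} − g_{i+1}·I_i + (g_i − g_{i+1})·N ≥ 0 hold for all i = 1, …, M−1. Let p₁, …, p_M ≥ 0 be the powers allocated to the users with total P = Σ_{i=1}^M p_i. Under the standard NOMA decoding order, the sum rate is R(p) = Σ_{i=1}^M log(1 + g_i·p_i / (g_i·Σ_{j<i} p_j + I_i + N)). Then R(p) ≤ log(1 + g₁·P / (I₁ + N)); that is, the sum rate is maximized by allocating the entire power P to the user with the highest link gain (and the bound is attained at p₁ = P, p₂ = … = p_M = 0). -/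

import Mathlib

/-- Single-cell single-sub-carrier NOMA sum rate (users indexed `0, …, M-1`, user `0`
strongest) is maximized by allocating all power to the strongest user:
the sum rate is at most `log (1 + g₀ P / (I₀ + N))` where `P` is the total power. -/
theorem noma_sumrate_best_user
    (M : ℕ) (hM : 1 ≤ M)
    (g I p : ℕ → ℝ)
    (hg_pos : ∀ i < M, 0 < g i)
    (hg_dec : ∀ i j, i ≤ j → j < M → g j ≤ g i)
    (hI : ∀ i < M, 0 ≤ I i)
    (N : ℝ) (hN : 0 < N)
    (hsic : ∀ i, i + 1 < M →
      g i * I (i + 1) - g (i + 1) * I i + (g i - g (i + 1)) * N ≥ 0)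
    (hp : ∀ i < M, 0 ≤ p i) :
    (∑ i ∈ Finset.range M,
        Real.log (1 + g i * p i /
          (g i * (∑ j ∈ Finset.range i, p j) + I i + N)))
      ≤ Real.log (1 + g 0 * (∑ i ∈ Finset.range M, p i) / (I 0 + N)) := by
  set C : ℕ → ℝ := fun i => I i + N with hCdef
  have hCpos : ∀ i < M, 0 < C i := fun i hi =>
    add_pos_of_nonneg_of_pos (hI i hi) hN
  set S : ℕ → ℝ := fun i => ∑ j ∈ Finset.range i, p j with hSdef
  have hSnn : ∀ i ≤ M, 0 ≤ S i := by
    intro i hi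
    apply Finset.sum_nonneg
    intro j hj
    exact hp j (lt_of_lt_of_le (Finset.mem_range.mp hj) hi)
  have hSsucc : ∀ i, S (i + 1) = S i + p i := fun i => Finset.sum_range_succ p i
  have hkey : ∀ i < M, g i * C 0 ≤ g 0 * C i := by
    intro i
    induction i with
    | zero => intro _; exact le_refl _
    | succ n ih =>
      intro h
      have hn : n < M := Nat.lt_of_succ_lt h
      have h1 := hsic n h
      have h2 := ih hn
      have hgn := hg_pos n hn
      have hCn := hCpos n hn
      have hC0 := hCpos 0 (lt_of_le_of_lt (Nat.zero_le _) h)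
      have hgn1 := hg_pos (n + 1) h
      -- h1 says g (n+1) * C n ≤ g n * C (n+1)
      have h1' : g (n + 1) * C n ≤ g n * C (n + 1) := by
        simp only [hCdef]; nlinarith [h1]
      have hCn1 := hCpos (n + 1) h
      nlinarith [mul_le_mul h2 h1' (le_of_lt (mul_pos hgn1 hCn))
        (le_of_lt (mul_pos (hg_pos 0 (lt_of_le_of_lt (Nat.zero_le _) h)) hCn)),
        mul_pos hgn hCn]
  -- per-term bound
  have hterm : ∀ i < M,
      Real.log (1 + g i * p i / (g i * S i + I i + N))
        ≤ Real.log (g 0 * S (i + 1) + C 0) - Real.log (g 0 * S i + C 0) := by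
    intro i hi
    have hgi := hg_pos i hi
    have hCi := hCpos i hi
    have hC0 := hCpos 0 (lt_of_lt_of_le Nat.one_pos hM)
    have hSi := hSnn i (le_of_lt hi)
    have hpi := hp i hi
    have hA : 0 < g i * S i + C i := by positivity
    have hB : 0 < g i * S (i + 1) + C i := by
      rw [hSsucc]; nlinarith
    have hA0 : 0 < g 0 * S i + C 0 := by
      have := hg_pos 0 (lt_of_lt_of_le Nat.one_pos hM); positivity
    have hB0 : 0 < g 0 * S (i + 1) + C 0 := by
      have := hg_pos 0 (lt_of_lt_of_le Nat.one_pos hM)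
      rw [hSsucc]; nlinarith
    have heq : 1 + g i * p i / (g i * S i + I i + N)
        = (g i * S (i + 1) + C i) / (g i * S i + C i) := by
      have : g i * S i + I i + N = g i * S i + C i := by simp [hCdef]; ring
      rw [this]
      field_simp
      rw [hSsucc]; ring
    rw [heq]
    have hratio : (g i * S (i + 1) + C i) / (g i * S i + C i)
        ≤ (g 0 * S (i + 1) + C 0) / (g 0 * S i + C 0) := by
      rw [div_le_div_iff₀ hA hA0]
      have hkeyi := hkey i hi
      have hmono : S i ≤ S (i + 1) := by rw [hSsucc]; linarith
      nlinarith [mul_nonneg (sub_nonneg.mpr hmono) (sub_nonneg.mpr hkeyi)]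
    calc Real.log ((g i * S (i + 1) + C i) / (g i * S i + C i))
        ≤ Real.log ((g 0 * S (i + 1) + C 0) / (g 0 * S i + C 0)) := by
          apply Real.log_le_log (by positivity) hratio
      _ = Real.log (g 0 * S (i + 1) + C 0) - Real.log (g 0 * S i + C 0) :=
          Real.log_div (ne_of_gt hB0) (ne_of_gt hA0)
  have hsum : (∑ i ∈ Finset.range M,
      Real.log (1 + g i * p i / (g i * S i + I i + N)))
      ≤ ∑ i ∈ Finset.range M,
        (Real.log (g 0 * S (i + 1) + C 0) - Real.log (g 0 * S i + C 0)) := by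
    apply Finset.sum_le_sum
    intro i hi
    exact hterm i (Finset.mem_range.mp hi)
  have htel : (∑ i ∈ Finset.range M,
      (Real.log (g 0 * S (i + 1) + C 0) - Real.log (g 0 * S i + C 0)))
      = Real.log (g 0 * S M + C 0) - Real.log (g 0 * S 0 + C 0) :=
    Finset.sum_range_sub (fun i => Real.log (g 0 * S i + C 0)) M
  have hC0 := hCpos 0 (lt_of_lt_of_le Nat.one_pos hM)
  have hg0 := hg_pos 0 (lt_of_lt_of_le Nat.one_pos hM)
  have hSM := hSnn M (le_refl M)
  have hfin : Real.log (g 0 * S M + C 0) - Real.log (g 0 * S 0 + C 0)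
      = Real.log (1 + g 0 * S M / (I 0 + N)) := by
    have hS0 : S 0 = 0 := by simp [hSdef]
    rw [hS0]
    have h1 : g 0 * (0:ℝ) + C 0 = C 0 := by ring
    rw [h1, ← Real.log_div (by positivity) (ne_of_gt hC0)]
    congr 1
    have : C 0 = I 0 + N := rfl
    rw [this]
    field_simp [show I 0 + N ≠ 0 from ne_of_gt (this ▸ hC0)]
    ring
  calc (∑ i ∈ Finset.range M,
      Real.log (1 + g i * p i / (g i * S i + I i + N)))
      ≤ _ := hsum
    _ = _ := htel
    _ = Real.log (1 + g 0 * S M / (I 0 + N)) := hfin
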